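/- arXiv:0803.0355 — 2 statements merged into one kernel-verified Lean document; each statement's English description precedes it below -/
import Mathlib

section
/- Let u, v be elements of a real inner product space with v ≠ 0, and let 0 ≤ α < 1, β = (1-α²)^{-1/2}. Then the condition |⟨u, v⟩| ≤ α‖u‖·‖v‖ holds if and only if ‖u‖ ≤ β·inf over t ∈ ℝ of ‖u - t·v‖. -/
open scoped RealInnerProductSpace

/-- For `v ≠ 0`, `0 ≤ α < 1` and `β = (1-α²)^{-1/2}`, the angle condition
`|⟨u,v⟩| ≤ α‖u‖‖v‖` is equivalent to `‖u‖ ≤ β · inf_{t∈ℝ} ‖u - t v‖`. -/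
theorem angle_condition_iff_dist_to_line
    {E : Type*} [NormedAddCommGroup E] [InnerProductSpace ℝ E]
    (u v : E) (hv : v ≠ 0) (α : ℝ) (hα₀ : 0 ≤ α) (hα₁ : α < 1) :
    |⟪u, v⟫| ≤ α * ‖u‖ * ‖v‖ ↔
      ‖u‖ ≤ (Real.sqrt (1 - α ^ 2))⁻¹ * ⨅ t : ℝ, ‖u - t • v‖ := by
  have hV : (0:ℝ) < ‖v‖ := norm_pos_iff.mpr hv
  set c : ℝ := ⟪u, v⟫ with hc
  set t₀ : ℝ := c / ‖v‖ ^ 2 with ht₀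
  have hV2 : (‖v‖:ℝ) ^ 2 ≠ 0 := by positivity
  -- orthogonality
  have horth : ⟪u - t₀ • v, v⟫ = 0 := by
    rw [inner_sub_left, real_inner_smul_left, ht₀, real_inner_self_eq_norm_sq]
    field_simp
    rw [← hc, sub_self]
  -- value of the norm at t₀
  have hval : ‖u - t₀ • v‖ ^ 2 = ‖u‖ ^ 2 - c ^ 2 / ‖v‖ ^ 2 := by
    rw [norm_sub_sq_real, real_inner_smul_right, norm_smul, mul_pow, ← hc,
      Real.norm_eq_abs, sq_abs]
    field_simp [ht₀]
    rw [ht₀]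
    field_simp
    ring
  -- minimality
  have hmin : ∀ t : ℝ, ‖u - t₀ • v‖ ≤ ‖u - t • v‖ := by
    intro t
    have hdecomp : u - t • v = (u - t₀ • v) + (t₀ - t) • v := by
      rw [sub_smul]; abel
    have hsq : ‖u - t • v‖ ^ 2 = ‖u - t₀ • v‖ ^ 2 + ‖(t₀ - t) • v‖ ^ 2 := by
      rw [hdecomp, norm_add_sq_real, real_inner_smul_right, horth]
      ring
    nlinarith [norm_nonneg (u - t • v), norm_nonneg (u - t₀ • v), norm_nonneg ((t₀ - t) • v),
      sq_nonneg ‖(t₀ - t) • v‖]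
  have hbdd : BddBelow (Set.range fun t : ℝ => ‖u - t • v‖) := by
    exact ⟨0, by rintro x ⟨t, rfl⟩; exact norm_nonneg _⟩
  have hinf : (⨅ t : ℝ, ‖u - t • v‖) = ‖u - t₀ • v‖ :=
    le_antisymm (ciInf_le hbdd t₀) (le_ciInf hmin)
  rw [hinf]
  have hs : (0:ℝ) ≤ 1 - α ^ 2 := by nlinarith
  have hβ : (0:ℝ) < Real.sqrt (1 - α ^ 2) := Real.sqrt_pos.mpr (by nlinarith)
  have hV2pos : (0:ℝ) < ‖v‖ ^ 2 := by positivity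
  rw [le_inv_mul_iff₀ hβ]
  constructor
  · intro h
    have h2 : c ^ 2 ≤ α ^ 2 * ‖u‖ ^ 2 * ‖v‖ ^ 2 := by
      nlinarith [sq_abs c, abs_nonneg c, norm_nonneg u, norm_nonneg v,
        mul_nonneg (mul_nonneg hα₀ (norm_nonneg u)) (norm_nonneg v)]
    have h3 : c ^ 2 / ‖v‖ ^ 2 ≤ α ^ 2 * ‖u‖ ^ 2 := (div_le_iff₀ hV2pos).mpr (by nlinarith)
    have hd2 : (Real.sqrt (1 - α ^ 2) * ‖u‖) ^ 2 ≤ ‖u - t₀ • v‖ ^ 2 := by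
      rw [mul_pow, Real.sq_sqrt hs, hval]; nlinarith
    nlinarith [norm_nonneg (u - t₀ • v), mul_nonneg hβ.le (norm_nonneg u)]
  · intro h
    have hd2 : (Real.sqrt (1 - α ^ 2) * ‖u‖) ^ 2 ≤ ‖u - t₀ • v‖ ^ 2 :=
      pow_le_pow_left₀ (by positivity) h 2
    rw [mul_pow, Real.sq_sqrt hs, hval] at hd2
    have h3 : c ^ 2 / ‖v‖ ^ 2 ≤ α ^ 2 * ‖u‖ ^ 2 := by nlinarith [hd2, norm_nonneg u]
    have h2 : c ^ 2 ≤ α ^ 2 * ‖u‖ ^ 2 * ‖v‖ ^ 2 := by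
      exact (div_le_iff₀ hV2pos).mp h3
    nlinarith [sq_abs c, abs_nonneg c,
      mul_nonneg (mul_nonneg hα₀ (norm_nonneg u)) (norm_nonneg v)]
end

section
/- Let V be a finite-dimensional subspace of a Hilbert space H consisting of (equivalence classes of) functions, closed under the property that D(v) = 0 for all v ∈ V, and suppose the seminorm u ↦ ‖D(u)‖ satisfies: any bounded sequence uₙ in a Banach space E compactly embedded in H with ‖D(uₙ)‖ → 0 has a subsequence converging in H to some element of V. If additionally ‖u‖_E ≤ C(‖u‖_H + ‖D(u)‖) for all u ∈ E, then there is C' such that for every u ∈ E orthogonal (in H) to V: ‖u‖_E ≤ C'‖D(u)‖. -/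
open Filter Topology
open scoped RealInnerProductSpace

/-- Abstract Korn-type inequality via compactness: `E ↪ H` with embedding `ι`,
`D : E → F` bounded linear with finite-dimensional kernel `V`; if bounded
sequences with `‖D uₙ‖ → 0` have subsequences converging in `H` to elements of
`V` (compactness), and the first Korn inequality
`‖u‖_E ≤ C(‖ι u‖_H + ‖D u‖)` holds, then the second Korn inequality
`‖u‖_E ≤ C' ‖D u‖` holds for all `u` orthogonal (in `H`) to `V`. -/
theorem abstract_korn_second_inequality
    {E H F : Type*}
    [NormedAddCommGroup E] [NormedSpace ℝ E] [CompleteSpace E]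
    [NormedAddCommGroup H] [InnerProductSpace ℝ H] [CompleteSpace H]
    [NormedAddCommGroup F] [NormedSpace ℝ F]
    (ι : E →L[ℝ] H) (hι : Function.Injective ι)
    (D : E →L[ℝ] F)
    (V : Submodule ℝ E) (hVker : ∀ v : E, v ∈ V ↔ D v = 0)
    (hVfd : FiniteDimensional ℝ V)
    (hcompact : ∀ u : ℕ → E, (∃ M : ℝ, ∀ k, ‖u k‖ ≤ M) →
      Tendsto (fun k => ‖D (u k)‖) atTop (𝓝 0) →
      ∃ φ : ℕ → ℕ, StrictMono φ ∧ ∃ v ∈ V,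
        Tendsto (fun k => ι (u (φ k))) atTop (𝓝 (ι v)))
    (C : ℝ) (hC : 0 < C)
    (hfirst : ∀ u : E, ‖u‖ ≤ C * (‖ι u‖ + ‖D u‖)) :
    ∃ C' : ℝ, 0 < C' ∧ ∀ u : E,
      (∀ v ∈ V, ⟪ι u, ι v⟫ = 0) → ‖u‖ ≤ C' * ‖D u‖ := by
  by_contra hcon
  push_neg at hcon
  have hsel : ∀ n : ℕ, ∃ u : E, (∀ v ∈ V, ⟪ι u, ι v⟫ = 0) ∧
      ((n : ℝ) + 1) * ‖D u‖ < ‖u‖ := by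
    intro n
    obtain ⟨u, hu1, hu2⟩ := hcon ((n : ℝ) + 1) (by positivity)
    exact ⟨u, hu1, hu2⟩
  choose u hu_orth hu_lt using hsel
  have hu_ne : ∀ n, u n ≠ 0 := by
    intro n hn
    have := hu_lt n
    simp [hn] at this
  have hu_pos : ∀ n, (0:ℝ) < ‖u n‖ := fun n => norm_pos_iff.mpr (hu_ne n)
  set w : ℕ → E := fun n => ‖u n‖⁻¹ • u n with hw
  have hw_norm : ∀ n, ‖w n‖ = 1 := by
    intro n
    simp [hw, norm_smul, abs_of_pos (inv_pos.mpr (hu_pos n)),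
      inv_mul_cancel₀ (hu_pos n).ne']
  have hDw : ∀ n, ‖D (w n)‖ = ‖u n‖⁻¹ * ‖D (u n)‖ := by
    intro n
    simp [hw, norm_smul, abs_of_pos (inv_pos.mpr (hu_pos n))]
  have hDw_lt : ∀ n, ‖D (w n)‖ < 1 / ((n : ℝ) + 1) := by
    intro n
    rw [hDw, inv_mul_lt_iff₀ (hu_pos n), mul_one_div, lt_div_iff₀ (by positivity), mul_comm]
    exact hu_lt n
  have hDw_tend : Tendsto (fun n => ‖D (w n)‖) atTop (𝓝 0) := by
    apply squeeze_zero (fun n => norm_nonneg _) (fun n => (hDw_lt n).le)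
    exact tendsto_one_div_add_atTop_nhds_zero_nat
  obtain ⟨φ, hφ, v, hvV, htend⟩ := hcompact w ⟨1, fun k => (hw_norm k).le⟩ hDw_tend
  -- orthogonality passes to the limit: ⟪ι v, ι v⟫ = 0
  have hw_orth : ∀ n, ⟪ι (w n), ι v⟫ = 0 := by
    intro n
    have : ι (w n) = ‖u n‖⁻¹ • ι (u n) := by simp [hw]
    rw [this, real_inner_smul_left, hu_orth n v hvV, mul_zero]
  have hlim_inner : Tendsto (fun k => ⟪ι (w (φ k)), ι v⟫) atTop (𝓝 ⟪ι v, ι v⟫) :=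
    Filter.Tendsto.inner (𝕜 := ℝ) htend (tendsto_const_nhds : Filter.Tendsto (fun _ : ℕ => ι v) atTop (𝓝 (ι v)))
  have hvv : ⟪ι v, ι v⟫ = (0:ℝ) := by
    have : Tendsto (fun _ : ℕ => (0:ℝ)) atTop (𝓝 ⟪ι v, ι v⟫) := by
      refine hlim_inner.congr fun k => (hw_orth (φ k))
    exact (tendsto_nhds_unique tendsto_const_nhds this).symm
  have hιv : ι v = 0 := by
    have := inner_self_eq_zero (𝕜 := ℝ).mp hvv
    exact this
  have hιv0 : Tendsto (fun k => ι (w (φ k))) atTop (𝓝 (0 : H)) := hιv ▸ htend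
  -- first Korn inequality gives a contradiction
  have hbound : ∀ k, (1:ℝ) ≤ C * (‖ι (w (φ k))‖ + ‖D (w (φ k))‖) := by
    intro k
    have := hfirst (w (φ k))
    rwa [hw_norm (φ k)] at this
  have htend0 : Tendsto (fun k => C * (‖ι (w (φ k))‖ + ‖D (w (φ k))‖)) atTop (𝓝 (C * (0 + 0))) := by
    apply Tendsto.const_mul
    exact Tendsto.add (tendsto_norm_zero.comp hιv0) (hDw_tend.comp hφ.tendsto_atTop)
  have : (1:ℝ) ≤ C * (0 + 0) :=
    le_of_tendsto_of_tendsto' tendsto_const_nhds htend0 hbound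
  simp at this
  linarith
end
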